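/- Let X be a compact topological space, f : X → X a continuous map, and φ : X → ℝ a continuous function. Suppose that for every x ∈ X there exists an integer n ≥ 1 with Σ_{i=0}^{n-1} φ(f^i(x)) < 0. Then there exist a real constant C and ε > 0 such that Σ_{i=0}^{n-1} φ(f^i(x)) ≤ C - ε·n for every x ∈ X and every integer n ≥ 1. -/
import Mathlib


/-- If every orbit of a continuous map `f` on a compact space has some Birkhoff sum of the
continuous function `φ` that is negative, then all Birkhoff sums satisfy a uniform linear
bound `Σ_{i<n} φ(fⁱx) ≤ C - ε·n`. -/
theorem birkhoff_uniform_decay {X : Type*} [TopologicalSpace X] [CompactSpace X]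
    (f : X → X) (hf : Continuous f) (φ : X → ℝ) (hφ : Continuous φ)
    (h : ∀ x : X, ∃ n : ℕ, 1 ≤ n ∧ ∑ i ∈ Finset.range n, φ (f^[i] x) < 0) :
    ∃ C ε : ℝ, 0 < ε ∧ ∀ x : X, ∀ n : ℕ, 1 ≤ n →
      ∑ i ∈ Finset.range n, φ (f^[i] x) ≤ C - ε * n := by
  rcases isEmpty_or_nonempty X with hX | hX
  · exact ⟨0, 1, one_pos, fun x => (IsEmpty.false x).elim⟩
  haveI : Nonempty X := hX
  set S : ℕ → X → ℝ := fun n x => ∑ i ∈ Finset.range n, φ (f^[i] x) with hSdef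
  have hScont : ∀ n, Continuous (S n) := fun n =>
    continuous_finset_sum _ fun i _ => hφ.comp (hf.iterate i)
  -- splitting of Birkhoff sums
  have hsplit : ∀ (m k : ℕ) (x : X), S (m + k) x = S m x + S k (f^[m] x) := by
    intro m k x
    simp only [hSdef]
    rw [Finset.sum_range_add]
    congr 1
    refine Finset.sum_congr rfl fun i _ => ?_
    rw [add_comm m i, Function.iterate_add_apply]
  -- open cover and finite subcover
  have hopen : ∀ n : ℕ, IsOpen {x : X | 1 ≤ n ∧ S n x < 0} := by
    intro n
    rcases Nat.eq_zero_or_pos n with h0 | h1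
    · convert isOpen_empty
      ext x; simp [h0]
    · have : {x : X | 1 ≤ n ∧ S n x < 0} = S n ⁻¹' (Set.Iio 0) := by
        ext x
        simp only [Set.mem_setOf_eq, Set.mem_preimage, Set.mem_Iio]
        exact ⟨fun h => h.2, fun h => ⟨h1, h⟩⟩
      rw [this]
      exact (hScont n).isOpen_preimage _ isOpen_Iio
  have hcover : (Set.univ : Set X) ⊆ ⋃ n : ℕ, {x : X | 1 ≤ n ∧ S n x < 0} := by
    intro x _
    obtain ⟨n, h1, h2⟩ := h x
    exact Set.mem_iUnion.2 ⟨n, h1, h2⟩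
  obtain ⟨T, hT⟩ := isCompact_univ.elim_finite_subcover _ hopen hcover
  have hwit : ∀ x : X, ∃ m ∈ T, 1 ≤ m ∧ S m x < 0 := by
    intro x
    have := hT (Set.mem_univ x)
    simp only [Set.mem_iUnion, Set.mem_setOf_eq] at this
    obtain ⟨m, hmT, h1, h2⟩ := this
    exact ⟨m, hmT, h1, h2⟩
  obtain ⟨x₀⟩ := hX
  have hTne : T.Nonempty := by
    obtain ⟨m, hmT, _, _⟩ := hwit x₀
    exact ⟨m, hmT⟩
  -- the min over T is continuous and attains a negative maximum
  set g : X → ℝ := fun x => T.inf' hTne (fun n => S n x) with hgdef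
  have hgcont : Continuous g := by
    have : g = (fun x => T.inf' hTne (fun n => S n x)) := rfl
    rw [this]
    exact Continuous.finset_inf'_apply hTne fun i _ => hScont i
  obtain ⟨z, _, hz⟩ := isCompact_univ.exists_isMaxOn Set.univ_nonempty hgcont.continuousOn
  have hgneg : ∀ x : X, g x < 0 := by
    intro x
    obtain ⟨m, hmT, _, h2⟩ := hwit x
    exact lt_of_le_of_lt (Finset.inf'_le _ hmT) h2
  set δ : ℝ := -g z with hδdef
  have hδpos : 0 < δ := by simp [hδdef]; exact hgneg z
  have hkey : ∀ x : X, ∃ m ∈ T, 1 ≤ m ∧ S m x ≤ -δ := by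
    intro x
    obtain ⟨m, hmT, hgx⟩ := Finset.exists_mem_eq_inf' hTne (fun n => S n x)
    have hle : S m x ≤ -δ := by
      rw [← hgx, hδdef, neg_neg]
      exact hz (Set.mem_univ x)
    refine ⟨m, hmT, ?_, hle⟩
    by_contra hm
    have : m = 0 := by omega
    subst this
    simp only [hSdef, Finset.range_zero, Finset.sum_empty] at hle
    linarith
  set N : ℕ := T.max' hTne with hNdef
  have hN1 : 1 ≤ N := by
    obtain ⟨m, hmT, hm1, _⟩ := hwit x₀
    exact le_trans hm1 (T.le_max' m hmT)
  have hNpos : (0 : ℝ) < N := by exact_mod_cast hN1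
  -- upper bound for φ
  obtain ⟨w, _, hw⟩ := isCompact_univ.exists_isMaxOn Set.univ_nonempty hφ.continuousOn
  set M : ℝ := max (φ w) 0 with hMdef
  have hM0 : 0 ≤ M := le_max_right _ _
  have hφle : ∀ x : X, φ x ≤ M := fun x =>
    le_trans (hw (Set.mem_univ x)) (le_max_left _ _)
  have hSle : ∀ (n : ℕ) (x : X), S n x ≤ n * M := by
    intro n x
    calc S n x ≤ ∑ _i ∈ Finset.range n, M :=
          Finset.sum_le_sum fun i _ => hφle _
      _ = n * M := by simp
  set ε : ℝ := δ / N with hεdef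
  have hεpos : 0 < ε := div_pos hδpos hNpos
  set C : ℝ := N * M + δ with hCdef
  refine ⟨C, ε, hεpos, ?_⟩
  have main : ∀ n : ℕ, ∀ x : X, 1 ≤ n → S n x ≤ C - ε * n := by
    intro n
    induction n using Nat.strong_induction_on with
    | _ n ih =>
      intro x hn
      by_cases hcase : n ≤ N
      · have h1 : S n x ≤ n * M := hSle n x
        have h2 : (n : ℝ) * M ≤ N * M :=
          mul_le_mul_of_nonneg_right (by exact_mod_cast hcase) hM0
        have h3 : ε * n ≤ δ := by
          rw [hεdef, div_mul_eq_mul_div, div_le_iff₀ hNpos]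
          have : (n : ℝ) ≤ N := by exact_mod_cast hcase
          nlinarith [hδpos.le]
        calc S n x ≤ N * M := le_trans h1 h2
          _ = C - δ := by rw [hCdef]; ring
          _ ≤ C - ε * n := by linarith
      · obtain ⟨m, hmT, hm1, hmS⟩ := hkey x
        have hmN : m ≤ N := T.le_max' m hmT
        have hmn : m < n := by omega
        have heq : S n x = S m x + S (n - m) (f^[m] x) := by
          have := hsplit m (n - m) x
          rwa [Nat.add_sub_cancel' hmn.le] at this
        have hih : S (n - m) (f^[m] x) ≤ C - ε * (n - m : ℕ) :=
          ih (n - m) (by omega) (f^[m] x) (by omega)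
        have hcast : ((n - m : ℕ) : ℝ) = (n : ℝ) - m := by
          rw [Nat.cast_sub hmn.le]
        have hεm : ε * m ≤ δ := by
          rw [hεdef, div_mul_eq_mul_div, div_le_iff₀ hNpos]
          have : (m : ℝ) ≤ N := by exact_mod_cast hmN
          nlinarith [hδpos.le]
        rw [heq]
        calc S m x + S (n - m) (f^[m] x) ≤ -δ + (C - ε * (n - m : ℕ)) := by linarith
          _ = C - ε * n + (ε * m - δ) := by rw [hcast]; ring
          _ ≤ C - ε * n := by linarith
  exact fun x n hn => main n x hn
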